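/- Let Z and V be real Banach spaces with Z continuously embedded in V, T > 0, τ ∈ (0,T], β > 0, c₀, c₁ > 0, μ ∈ L¹(0,T) nonnegative, and I : [0,T] × Z → ℝ continuously differentiable with I(t,z) ≥ c₁‖z‖_Z − c₀ and |∂_t I(t,z)| ≤ μ(t)(I(t,z) + β) for all t ∈ [0,T], z ∈ Z. Let R : Z → [0,∞], and let z₀, z₁, z₂, … ∈ Z and 0 = t₀ ≤ t₁ ≤ t₂ ≤ … ≤ T satisfy, for all k ≥ 1, t_k = t_{k−1} + τ − ‖z_k − z_{k−1}‖_V and the energy decrease I(t_{k−1}, z_k) + R(z_k − z_{k−1}) ≤ I(t_{k−1}, z_{k−1}). Then for every k: I(t_k, z_k) + Σ_{i=1}^{k} R(z_i − z_{i−1}) ≤ (β + I(0, z₀))·exp(∫_0^T μ(s) ds), and in particular ‖z_k‖_Z ≤ (c₀ + (β + I(0, z₀))·exp(∫_0^T μ(s) ds))/c₁. -/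

import Mathlib

open Set

open MeasureTheory

namespace Stmt15Aux2

variable {T : ℝ} {μ g g' : ℝ → ℝ}

lemma interv (hμint : IntegrableOn μ (Icc (0:ℝ) T)) {u v : ℝ}
    (hu : u ∈ Icc (0:ℝ) T) (hv : v ∈ Icc (0:ℝ) T) :
    IntervalIntegrable μ volume u v :=
  (hμint.mono_set (uIcc_subset_Icc hu hv)).intervalIntegrable

lemma auxFTC (hg : ∀ t ∈ Icc (0:ℝ) T, HasDerivWithinAt g (g' t) (Icc 0 T) t)
    (hg' : ContinuousOn g' (Icc (0:ℝ) T))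
    {a b : ℝ} (ha : a ∈ Icc (0:ℝ) T) (hb : b ∈ Icc (0:ℝ) T) (hab : a ≤ b) :
    ∫ s in a..b, g' s = g b - g a := by
  have hsub : Icc a b ⊆ Icc (0:ℝ) T := Icc_subset_Icc ha.1 hb.2
  apply intervalIntegral.integral_eq_sub_of_hasDeriv_right_of_le hab
  · exact fun x hx => ((hg x (hsub hx)).continuousWithinAt).mono hsub
  · intro x hx
    have hxm : Icc (0:ℝ) T ∈ nhds x := by
      refine Icc_mem_nhds ?_ ?_
      · exact lt_of_le_of_lt ha.1 hx.1
      · exact lt_of_lt_of_le hx.2 hb.2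
    exact (((hg x (mem_of_mem_nhds hxm)).hasDerivAt hxm)).hasDerivWithinAt
  · exact (hg'.mono hsub).intervalIntegrable_of_Icc hab

lemma auxCore (hμint : IntegrableOn μ (Icc (0:ℝ) T))
    (hμ0 : ∀ t ∈ Icc (0:ℝ) T, 0 ≤ μ t)
    (hg : ∀ t ∈ Icc (0:ℝ) T, HasDerivWithinAt g (g' t) (Icc 0 T) t)
    (hg' : ContinuousOn g' (Icc (0:ℝ) T))
    (hb : ∀ t ∈ Icc (0:ℝ) T, |g' t| ≤ μ t * g t)
    {c d : ℝ} (hc : c ∈ Icc (0:ℝ) T) (hd : d ∈ Icc (0:ℝ) T) (hcd : c ≤ d)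
    (hδ1 : (∫ s in c..d, μ s) < 1) :
    ∀ s ∈ Icc c d, g s ≤ max (g c) 0 / (1 - ∫ s in c..d, μ s) := by
  set δ := ∫ s in c..d, μ s with hδdef
  have hsub : Icc c d ⊆ Icc (0:ℝ) T := Icc_subset_Icc hc.1 hd.2
  have hδ0 : 0 ≤ δ := intervalIntegral.integral_nonneg hcd (fun u hu => hμ0 u (hsub hu))
  have gcont : ContinuousOn g (Icc (0:ℝ) T) := fun x hx => (hg x hx).continuousWithinAt
  obtain ⟨xs, hxsmem, hxsmax⟩ := isCompact_Icc.exists_isMaxOn (nonempty_Icc.2 hcd)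
    ((gcont.mono hsub).sup continuousOn_const)
  set M := max (g xs) 0 with hMdef
  have hM0 : (0:ℝ) ≤ M := le_max_right _ _
  have key : ∀ s ∈ Icc c d, g s ≤ max (g c) 0 + δ * M := by
    intro s hs
    have hsmem : s ∈ Icc (0:ℝ) T := hsub hs
    have hsubs : Icc c s ⊆ Icc c d := Icc_subset_Icc le_rfl hs.2
    have hftc := auxFTC hg hg' (hsub (left_mem_Icc.2 hcd)) hsmem hs.1
    have h1 : (∫ u in c..s, g' u) ≤ ∫ u in c..s, μ u * M := by
      apply intervalIntegral.integral_mono_on hs.1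
        ((hg'.mono (hsubs.trans hsub)).intervalIntegrable_of_Icc hs.1)
        ((interv hμint (hsub (left_mem_Icc.2 hcd)) hsmem).mul_const M)
      intro u hu
      have humem : u ∈ Icc (0:ℝ) T := hsub (hsubs hu)
      calc g' u ≤ |g' u| := le_abs_self _
        _ ≤ μ u * g u := hb u humem
        _ ≤ μ u * M := by
            refine mul_le_mul_of_nonneg_left ?_ (hμ0 u humem)
            exact le_trans (le_max_left _ _) (hxsmax (hsubs hu))
    have h2 : (∫ u in c..s, μ u * M) = (∫ u in c..s, μ u) * M :=
      intervalIntegral.integral_mul_const _ _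
    have h3 : (∫ u in c..s, μ u) ≤ δ := by
      have hadd := intervalIntegral.integral_add_adjacent_intervals
        (interv hμint (hsub (left_mem_Icc.2 hcd)) hsmem)
        (interv hμint hsmem (hsub (right_mem_Icc.2 hcd)))
      have hnn : (0:ℝ) ≤ ∫ u in s..d, μ u :=
        intervalIntegral.integral_nonneg hs.2
          (fun u hu => hμ0 u (hsub ⟨le_trans hs.1 hu.1, hu.2⟩))
      rw [hδdef]
      linarith [hadd]
    have h4 : (∫ u in c..s, μ u) * M ≤ δ * M := mul_le_mul_of_nonneg_right h3 hM0
    have h5 : g c ≤ max (g c) 0 := le_max_left _ _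
    linarith [hftc ▸ h1, h2 ▸ h4]
  have hMle : M ≤ max (g c) 0 / (1 - δ) := by
    have h4 : M ≤ max (g c) 0 + δ * M := by
      refine max_le (key xs hxsmem) ?_
      exact add_nonneg (le_max_right _ _) (mul_nonneg hδ0 hM0)
    rw [le_div_iff₀ (by linarith)]
    nlinarith
  intro s hs
  calc g s ≤ max (g s) 0 := le_max_left _ _
    _ ≤ M := hxsmax hs
    _ ≤ _ := hMle

end Stmt15Aux2

namespace Stmt15Aux3
open Stmt15Aux2

variable {T : ℝ} {μ g g' : ℝ → ℝ}

lemma auxGron (hμint : IntegrableOn μ (Icc (0:ℝ) T))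
    (hμ0 : ∀ t ∈ Icc (0:ℝ) T, 0 ≤ μ t)
    (hg : ∀ t ∈ Icc (0:ℝ) T, HasDerivWithinAt g (g' t) (Icc 0 T) t)
    (hg' : ContinuousOn g' (Icc (0:ℝ) T))
    (hb : ∀ t ∈ Icc (0:ℝ) T, |g' t| ≤ μ t * g t)
    {a b : ℝ} (ha : a ∈ Icc (0:ℝ) T) (hbm : b ∈ Icc (0:ℝ) T) (hab : a ≤ b) :
    g b ≤ max (g a) 0 * Real.exp (∫ s in a..b, μ s) := by
  have hsub : Icc a b ⊆ Icc (0:ℝ) T := Icc_subset_Icc ha.1 hbm.2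
  set G := max (g a) 0 with hGdef
  have hG0 : (0:ℝ) ≤ G := le_max_right _ _
  set Utot := ∫ s in a..b, μ s with hUtotdef
  have main : ∀ ε : ℝ, ε ∈ Ioo (0:ℝ) 1 → g b ≤ G * Real.exp (Utot / (1 - ε)) := by
    intro ε hε
    -- uniform continuity of the primitive
    have hUcont : ContinuousOn (fun x => ∫ r in a..x, μ r) (Icc a b) := by
      have h1 : IntegrableOn μ (uIcc a b) := hμint.mono_set (uIcc_subset_Icc ha hbm)
      have := intervalIntegral.continuousOn_primitive_interval (a := a) (b := b) h1
      rwa [uIcc_of_le hab] at this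
    obtain ⟨dd, hdd0, hddP⟩ := Metric.uniformContinuousOn_iff_le.mp
      (isCompact_Icc.uniformContinuousOn_of_continuous hUcont) ε hε.1
    obtain ⟨n, hn⟩ := exists_nat_gt ((b - a) / dd)
    set m : ℕ := n + 1 with hmdef
    have hm0 : (0:ℝ) < (m : ℝ) := by positivity
    set st := (b - a) / (m : ℝ) with hstdef
    have hst0 : 0 ≤ st := div_nonneg (by linarith) hm0.le
    have hstdd : st ≤ dd := by
      rw [hstdef, div_le_iff₀ hm0]
      have h1 : (b - a) / dd < (m : ℝ) := lt_of_lt_of_le hn (by exact_mod_cast Nat.le_succ n)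
      rw [div_lt_iff₀ hdd0] at h1
      nlinarith
    set p : ℕ → ℝ := fun j => a + j * st with hpdef
    have hp0 : p 0 = a := by simp [hpdef]
    have hpm : p m = b := by
      rw [hpdef, hstdef]; field_simp; ring
    have hpmono : ∀ j : ℕ, p j ≤ p (j + 1) := by
      intro j
      simp only [hpdef]
      push_cast
      nlinarith
    have hpIcc : ∀ j : ℕ, j ≤ m → p j ∈ Icc a b := by
      intro j hj
      constructor
      · have : (0:ℝ) ≤ (j:ℝ) * st := by positivity
        simp only [hpdef]; linarith
      · rw [← hpm]
        simp only [hpdef]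
        have : (j : ℝ) ≤ (m : ℝ) := by exact_mod_cast hj
        nlinarith
    have hδle : ∀ j : ℕ, j + 1 ≤ m → (∫ s in p j..p (j+1), μ s) ≤ ε := by
      intro j hj
      have hj' : j ≤ m := le_trans (Nat.le_succ j) hj
      have h1 := hddP (p (j+1)) (hpIcc _ hj) (p j) (hpIcc _ hj')
      have hdist : dist (p (j+1)) (p j) ≤ dd := by
        rw [Real.dist_eq]
        have : p (j+1) - p j = st := by simp only [hpdef]; push_cast; ring
        rw [this, abs_of_nonneg hst0]; exact hstdd
      have h2 := h1 hdist
      rw [Real.dist_eq] at h2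
      have hadd := intervalIntegral.integral_add_adjacent_intervals
        (interv hμint (hsub (hpIcc _ hj')) (hsub (hpIcc _ hj)))
        (interv hμint (hsub (hpIcc _ hj)) (hsub (hpIcc _ hj')))
      -- rewrite δ_j as difference of primitives
      have h3 : (∫ s in p j..p (j+1), μ s)
          = (∫ r in a..p (j+1), μ r) - (∫ r in a..p j, μ r) := by
        have hadd2 := intervalIntegral.integral_add_adjacent_intervals
          (interv hμint (hsub (left_mem_Icc.2 hab)) (hsub (hpIcc _ hj'))) (interv hμint (hsub (hpIcc _ hj')) (hsub (hpIcc _ hj)))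
        · linarith [hadd2]
      rw [h3]
      calc (∫ r in a..p (j+1), μ r) - (∫ r in a..p j, μ r)
          ≤ |(∫ r in a..p (j+1), μ r) - (∫ r in a..p j, μ r)| := le_abs_self _
        _ ≤ ε := h2
    have hIccj : ∀ j : ℕ, j + 1 ≤ m → Icc (p j) (p (j+1)) ⊆ Icc a b := by
      intro j hj u hu
      exact ⟨le_trans (hpIcc j (le_trans (Nat.le_succ j) hj)).1 hu.1,
        le_trans hu.2 (hpIcc _ hj).2⟩
    have hδ0' : ∀ j : ℕ, j + 1 ≤ m → 0 ≤ (∫ s in p j..p (j+1), μ s) := by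
      intro j hj
      exact intervalIntegral.integral_nonneg (hpmono j)
        (fun u hu => hμ0 u (hsub (hIccj j hj hu)))
    have hε1 : (0:ℝ) < 1 - ε := by linarith [hε.2]
    have ind : ∀ j : ℕ, j ≤ m →
        max (g (p j)) 0 ≤ G * Real.exp ((∫ r in a..p j, μ r) / (1 - ε)) := by
      intro j
      induction j with
      | zero =>
        intro _
        rw [hp0, intervalIntegral.integral_same, zero_div, Real.exp_zero, mul_one]
      | succ j ihj =>
        intro hjm
        have hj' : j ≤ m := le_trans (Nat.le_succ j) hjm
        set δj := ∫ s in p j..p (j+1), μ s with hδjdef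
        have hδj0 : 0 ≤ δj := hδ0' j hjm
        have hδjε : δj ≤ ε := hδle j hjm
        have hδj1 : δj < 1 := lt_of_le_of_lt hδjε hε.2
        have h1 : g (p (j+1)) ≤ max (g (p j)) 0 / (1 - δj) :=
          auxCore hμint hμ0 hg hg' hb (hsub (hpIcc _ hj')) (hsub (hpIcc _ hjm))
            (hpmono j) hδj1 (p (j+1)) (right_mem_Icc.2 (hpmono j))
        set Uj := ∫ r in a..p j, μ r with hUjdef
        have hUj1 : (∫ r in a..p (j+1), μ r) = Uj + δj := by
          have hadd2 := intervalIntegral.integral_add_adjacent_intervals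
            (interv hμint (hsub (left_mem_Icc.2 hab)) (hsub (hpIcc _ hj')))
            (interv hμint (hsub (hpIcc _ hj')) (hsub (hpIcc _ hjm)))
          linarith [hadd2]
        have hih := ihj hj'
        have h2 : max (g (p j)) 0 / (1 - δj)
            ≤ (G * Real.exp (Uj / (1 - ε))) / (1 - δj) :=
          by
          have := (div_le_div_iff_of_pos_right (show (0:ℝ) < 1 - δj by linarith)).mpr hih
          exact this
        have key : 1 ≤ Real.exp (δj / (1 - ε)) * (1 - δj) := by
          have k1 : δj / (1 - δj) ≤ δj / (1 - ε) :=
            div_le_div_of_nonneg_left hδj0 hε1 (by linarith)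
          have k2 : δj / (1 - δj) + 1 ≤ Real.exp (δj / (1 - δj)) :=
            Real.add_one_le_exp _
          have k3 : Real.exp (δj / (1 - δj)) ≤ Real.exp (δj / (1 - ε)) :=
            Real.exp_le_exp.2 k1
          have hne : (1:ℝ) - δj ≠ 0 := by linarith
          have k4 : (δj / (1 - δj) + 1) * (1 - δj) = 1 := by
            field_simp; ring
          nlinarith [Real.exp_pos (δj / (1 - ε))]
        have h3 : (G * Real.exp (Uj / (1 - ε))) / (1 - δj)
            ≤ G * Real.exp ((Uj + δj) / (1 - ε)) := by
          rw [div_le_iff₀ (by linarith), add_div, Real.exp_add]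
          have hGE : (0:ℝ) ≤ G * Real.exp (Uj / (1 - ε)) :=
            mul_nonneg hG0 (Real.exp_pos _).le
          nlinarith [mul_le_mul_of_nonneg_left key hGE]
        have h4 : g (p (j+1)) ≤ G * Real.exp ((∫ r in a..p (j+1), μ r) / (1 - ε)) := by
          rw [hUj1]
          exact le_trans h1 (le_trans h2 h3)
        exact max_le h4 (mul_nonneg hG0 (Real.exp_pos _).le)
    have := ind m le_rfl
    rw [hpm] at this
    exact le_trans (le_max_left _ _) this
  -- pass to the limit ε → 0⁺
  have hcontqq : ContinuousAt (fun ε : ℝ => G * Real.exp (Utot / (1 - ε))) 0 := by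
    have h1 : ContinuousAt (fun ε : ℝ => 1 - ε) 0 := by fun_prop
    have h2 : ContinuousAt (fun ε : ℝ => Utot / (1 - ε)) 0 :=
      ContinuousAt.div continuousAt_const h1 (by norm_num)
    exact continuousAt_const.mul (Real.continuous_exp.continuousAt.comp h2)
  have hlim : Filter.Tendsto (fun ε : ℝ => G * Real.exp (Utot / (1 - ε)))
      (nhdsWithin 0 (Ioi 0)) (nhds (G * Real.exp Utot)) := by
    have := hcontqq.tendsto
    simp only [sub_zero, div_one] at this
    exact this.mono_left nhdsWithin_le_nhds
  refine ge_of_tendsto hlim ?_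
  filter_upwards [Ioo_mem_nhdsGT_of_mem (by constructor <;> norm_num : (0:ℝ) ∈ Ico (0:ℝ) 1)]
    with ε hε using main ε hε

lemma auxNeg (hμint : IntegrableOn μ (Icc (0:ℝ) T))
    (hμ0 : ∀ t ∈ Icc (0:ℝ) T, 0 ≤ μ t)
    (hg : ∀ t ∈ Icc (0:ℝ) T, HasDerivWithinAt g (g' t) (Icc 0 T) t)
    (hg' : ContinuousOn g' (Icc (0:ℝ) T))
    (hb : ∀ t ∈ Icc (0:ℝ) T, |g' t| ≤ μ t * g t)
    {a b : ℝ} (ha : a ∈ Icc (0:ℝ) T) (hbm : b ∈ Icc (0:ℝ) T) (hab : a ≤ b)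
    (hga : g a < 0) : g b ≤ g a := by
  have hsub : Icc a b ⊆ Icc (0:ℝ) T := Icc_subset_Icc ha.1 hbm.2
  have hg0 : ∀ s ∈ Icc a b, g s ≤ 0 := by
    intro s hs
    have := auxGron hμint hμ0 hg hg' hb ha (hsub hs) hs.1
    rwa [max_eq_right hga.le, zero_mul] at this
  have hint : (∫ u in a..b, g' u) ≤ 0 := by
    have h0 : (∫ u in a..b, (0:ℝ)) = 0 := intervalIntegral.integral_zero
    rw [← h0]
    apply intervalIntegral.integral_mono_on hab
      ((hg'.mono hsub).intervalIntegrable_of_Icc hab)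
      intervalIntegrable_const
    intro u hu
    have humem : u ∈ Icc (0:ℝ) T := hsub hu
    calc g' u ≤ |g' u| := le_abs_self _
      _ ≤ μ u * g u := hb u humem
      _ ≤ 0 := mul_nonpos_of_nonneg_of_nonpos (hμ0 u humem) (hg0 u hu)
  have hftc := auxFTC hg hg' ha hbm hab
  linarith

lemma auxMu0 (hμint : IntegrableOn μ (Icc (0:ℝ) T))
    (hμ0 : ∀ t ∈ Icc (0:ℝ) T, 0 ≤ μ t)
    (hg : ∀ t ∈ Icc (0:ℝ) T, HasDerivWithinAt g (g' t) (Icc 0 T) t)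
    (hg' : ContinuousOn g' (Icc (0:ℝ) T))
    (hb : ∀ t ∈ Icc (0:ℝ) T, |g' t| ≤ μ t * g t)
    {a : ℝ} (ha : a ∈ Icc (0:ℝ) T) (hga : g a < 0) :
    ∀ s ∈ Icc (0:ℝ) T, a ≤ s → μ s = 0 := by
  intro s hs has
  have hgs : g s ≤ g a := auxNeg hμint hμ0 hg hg' hb ha hs has hga
  have h1 := hb s hs
  have h2 := hμ0 s hs
  nlinarith [abs_nonneg (g' s)]

end Stmt15Aux3


open Stmt15Aux2 Stmt15Aux3 in
/-- **Boundedness of energy and dissipation along the iterates.** Let `Z` and `V` be real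
Banach spaces with `Z` continuously embedded in `V` (via `ι`), `T > 0`, `τ ∈ (0,T]`,
`β > 0`, `c₀, c₁ > 0`, `μ ∈ L¹(0,T)` nonnegative, and `I : [0,T] × Z → ℝ` continuously
differentiable in time with `I(t,z) ≥ c₁‖z‖_Z − c₀` and `|∂ₜI(t,z)| ≤ μ(t)(I(t,z) + β)`.
Let `R : Z → [0,∞]`, and let iterates `z_k ∈ Z`, `0 = t₀ ≤ t₁ ≤ … ≤ T` satisfy the time
update `t_k = t_{k−1} + τ − ‖z_k − z_{k−1}‖_V` and the energy decrease
`I(t_{k−1}, z_k) + R(z_k − z_{k−1}) ≤ I(t_{k−1}, z_{k−1})`. Then for every `k`: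
`I(t_k, z_k) + Σ_{i=1}^k R(z_i − z_{i−1}) ≤ (β + I(0,z₀))·exp(∫₀ᵀ μ)` and
`‖z_k‖_Z ≤ (c₀ + (β + I(0,z₀))·exp(∫₀ᵀ μ))/c₁`. -/
theorem stmt15
    {Z V : Type*}
    [NormedAddCommGroup Z] [NormedSpace ℝ Z] [CompleteSpace Z]
    [NormedAddCommGroup V] [NormedSpace ℝ V] [CompleteSpace V]
    (ι : Z →L[ℝ] V) (hinj : Function.Injective ι)
    (T τ β c₀ c₁ : ℝ) (hT : 0 < T) (hτ : 0 < τ) (hτT : τ ≤ T)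
    (hβ : 0 < β) (hc₀ : 0 < c₀) (hc₁ : 0 < c₁)
    (μ : ℝ → ℝ) (hμint : MeasureTheory.IntegrableOn μ (Icc 0 T))
    (hμ0 : ∀ t ∈ Icc (0:ℝ) T, 0 ≤ μ t)
    (I dI : ℝ → Z → ℝ)
    (hdiff : ∀ z : Z, ∀ t ∈ Icc (0:ℝ) T,
      HasDerivWithinAt (fun s => I s z) (dI t z) (Icc 0 T) t)
    (hcont : ∀ z : Z, ContinuousOn (fun t => dI t z) (Icc 0 T))
    (hcoerc : ∀ t ∈ Icc (0:ℝ) T, ∀ z : Z, c₁ * ‖z‖ - c₀ ≤ I t z)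
    (hbound : ∀ z : Z, ∀ t ∈ Icc (0:ℝ) T, |dI t z| ≤ μ t * (I t z + β))
    (R : Z → EReal) (hR0 : ∀ v : Z, 0 ≤ R v)
    (z : ℕ → Z) (t : ℕ → ℝ)
    (ht0 : t 0 = 0) (hmono : Monotone t) (htT : ∀ k, t k ≤ T)
    (hupdate : ∀ k : ℕ, t (k + 1) = t k + τ - ‖ι (z (k + 1) - z k)‖)
    (hdecrease : ∀ k : ℕ,
      ((I (t k) (z (k + 1)) : ℝ) : EReal) + R (z (k + 1) - z k)
        ≤ ((I (t k) (z k) : ℝ) : EReal)) :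
    ∀ k : ℕ,
      ((I (t k) (z k) : ℝ) : EReal) + ∑ i ∈ Finset.range k, R (z (i + 1) - z i)
          ≤ (((β + I 0 (z 0)) * Real.exp (∫ s in (0:ℝ)..T, μ s) : ℝ) : EReal) ∧
      ‖z k‖ ≤ (c₀ + (β + I 0 (z 0)) * Real.exp (∫ s in (0:ℝ)..T, μ s)) / c₁ := by
  classical
  have htmem : ∀ k, t k ∈ Icc (0:ℝ) T := by
    intro k
    refine ⟨?_, htT k⟩
    rw [← ht0]
    exact hmono (Nat.zero_le k)
  have hE0 : (0:ℝ) ∈ Icc (0:ℝ) T := ⟨le_rfl, hT.le⟩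
  have hgd : ∀ z' : Z, ∀ s ∈ Icc (0:ℝ) T,
      HasDerivWithinAt (fun u => I u z' + β) (dI s z') (Icc 0 T) s :=
    fun z' s hs => (hdiff z' s hs).add_const β
  have hrex : ∀ k : ℕ, ∃ rr : ℝ, 0 ≤ rr ∧ R (z (k+1) - z k) = (rr : EReal) := by
    intro k
    have hd := hdecrease k
    have hne : R (z (k+1) - z k) ≠ ⊤ := by
      intro htop
      rw [htop, EReal.add_top_of_ne_bot (EReal.coe_ne_bot _)] at hd
      exact (EReal.coe_ne_top _) (top_le_iff.mp hd)
    have hnb : R (z (k+1) - z k) ≠ ⊥ := by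
      intro hbot
      have h0 := hR0 (z (k+1) - z k)
      rw [hbot] at h0
      simp at h0
    refine ⟨(R (z (k+1) - z k)).toReal, ?_, (EReal.coe_toReal hne hnb).symm⟩
    have h0 := EReal.toReal_le_toReal (hR0 (z (k+1) - z k)) (by simp) hne
    simpa using h0
  choose r hr0 hrEq using hrex
  have hdec' : ∀ k : ℕ, I (t k) (z (k+1)) + r k ≤ I (t k) (z k) := by
    intro k
    have hd := hdecrease k
    rw [hrEq k, ← EReal.coe_add] at hd
    exact_mod_cast hd
  set f0 := β + I 0 (z 0) with hf0def
  set S : ℕ → ℝ := fun k => ∑ i ∈ Finset.range k, r i with hSdef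
  have hS0 : ∀ k, 0 ≤ S k := fun k => Finset.sum_nonneg fun i _ => hr0 i
  have hSum : ∀ k : ℕ, (∑ i ∈ Finset.range k, R (z (i+1) - z i)) = ((S k : ℝ) : EReal) := by
    intro k
    induction k with
    | zero => simp [hSdef]
    | succ n ih =>
      rw [Finset.sum_range_succ, ih, hrEq n, ← EReal.coe_add]
      norm_cast
      simp [hSdef, Finset.sum_range_succ]
  have hii : ∀ u v : ℝ, u ∈ Icc (0:ℝ) T → v ∈ Icc (0:ℝ) T →
      IntervalIntegrable μ MeasureTheory.volume u v :=
    fun u v hu hv => Stmt15Aux2.interv hμint hu hv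
  have P : ∀ k : ℕ, I (t k) (z k) + β + S k ≤ f0 * Real.exp (∫ s in (0:ℝ)..t k, μ s) := by
    intro k
    induction k with
    | zero =>
      rw [ht0, intervalIntegral.integral_same, Real.exp_zero, mul_one]
      simp only [hSdef, Finset.range_zero, Finset.sum_empty, add_zero]
      rw [hf0def]
      linarith
    | succ k ih =>
      have ha := htmem k
      have hbm := htmem (k+1)
      have hab : t k ≤ t (k+1) := hmono (Nat.le_succ k)
      have hPsplit : (∫ s in (0:ℝ)..t (k+1), μ s)
          = (∫ s in (0:ℝ)..t k, μ s) + ∫ s in t k..t (k+1), μ s :=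
        (intervalIntegral.integral_add_adjacent_intervals
          (hii 0 (t k) hE0 ha) (hii (t k) (t (k+1)) ha hbm)).symm
      have hek0 : 0 ≤ ∫ s in t k..t (k+1), μ s :=
        intervalIntegral.integral_nonneg hab
          (fun u hu => hμ0 u ⟨le_trans ha.1 hu.1, le_trans hu.2 hbm.2⟩)
      set ek := Real.exp (∫ s in t k..t (k+1), μ s) with hekdef
      have hek1 : 1 ≤ ek := by
        have := Real.exp_le_exp.2 hek0
        rwa [Real.exp_zero] at this
      set Pk := Real.exp (∫ s in (0:ℝ)..t k, μ s) with hPkdef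
      have hPk0 : 0 < Pk := Real.exp_pos _
      have hSsucc : S (k+1) = S k + r k := by simp [hSdef, Finset.sum_range_succ]
      rw [hPsplit, Real.exp_add, ← hPkdef, ← hekdef]
      by_cases hη : 0 ≤ I (t k) (z (k+1)) + β
      · have hG := auxGron (g := fun u => I u (z (k+1)) + β)
          (g' := fun u => dI u (z (k+1))) hμint hμ0 (hgd (z (k+1)))
          (hcont (z (k+1))) (hbound (z (k+1))) ha hbm hab
        rw [max_eq_left hη] at hG
        have e2 : I (t k) (z (k+1)) + β ≤ (f0 * Pk - S k) - r k := by
          have := hdec' k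
          linarith [ih]
        have q1 : (I (t k) (z (k+1)) + β) * ek ≤ ((f0 * Pk - S k) - r k) * ek :=
          mul_le_mul_of_nonneg_right e2 (by linarith)
        have q2 : S k ≤ S k * ek := le_mul_of_one_le_right (hS0 k) hek1
        have q3 : r k ≤ r k * ek := le_mul_of_one_le_right (hr0 k) hek1
        have hG' : I (t (k+1)) (z (k+1)) + β ≤ (I (t k) (z (k+1)) + β) * ek := hG
        have q4 : (f0 * Pk - S k - r k) * ek = f0 * (Pk * ek) - S k * ek - r k * ek := by
          ring
        rw [hSsucc]
        linarith [hG', q1, q2, q3, q4.le, q4.ge]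
      · push_neg at hη
        have hN := auxNeg (g := fun u => I u (z (k+1)) + β)
          (g' := fun u => dI u (z (k+1))) hμint hμ0 (hgd (z (k+1)))
          (hcont (z (k+1))) (hbound (z (k+1))) ha hbm hab hη
        have hμz : ∀ s' ∈ Icc (t k) (t (k+1)), μ s' = 0 := by
          intro s' hs'
          exact auxMu0 (g := fun u => I u (z (k+1)) + β)
            (g' := fun u => dI u (z (k+1))) hμint hμ0 (hgd (z (k+1)))
            (hcont (z (k+1))) (hbound (z (k+1))) ha hη s'
            ⟨le_trans ha.1 hs'.1, le_trans hs'.2 hbm.2⟩ hs'.1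
        have hint0 : (∫ s in t k..t (k+1), μ s) = 0 := by
          rw [show (∫ s in t k..t (k+1), μ s) = ∫ s in t k..t (k+1), (0:ℝ) from
            intervalIntegral.integral_congr
              (fun u hu => hμz u (by rwa [uIcc_of_le hab] at hu)),
            intervalIntegral.integral_zero]
        have hek : ek = 1 := by rw [hekdef, hint0, Real.exp_zero]
        have hN' : I (t (k+1)) (z (k+1)) + β ≤ I (t k) (z (k+1)) + β := hN
        rw [hSsucc, hek, mul_one]
        linarith [hN', hdec' k, ih]
  have real1 : ∀ k, I (t k) (z k) + S k ≤ f0 * Real.exp (∫ s in (0:ℝ)..T, μ s) := by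
    intro k
    have hPk := P k
    by_cases hf0 : 0 ≤ f0
    · have hsplit : (∫ s in (0:ℝ)..T, μ s)
          = (∫ s in (0:ℝ)..t k, μ s) + ∫ s in t k..T, μ s :=
        (intervalIntegral.integral_add_adjacent_intervals
          (hii 0 (t k) hE0 (htmem k)) (hii (t k) T (htmem k) (right_mem_Icc.2 hT.le))).symm
      have hnn : 0 ≤ ∫ s in t k..T, μ s :=
        intervalIntegral.integral_nonneg (htT k)
          (fun u hu => hμ0 u ⟨le_trans (htmem k).1 hu.1, hu.2⟩)
      have hmon : Real.exp (∫ s in (0:ℝ)..t k, μ s) ≤ Real.exp (∫ s in (0:ℝ)..T, μ s) :=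
        Real.exp_le_exp.2 (by rw [hsplit]; linarith)
      have := mul_le_mul_of_nonneg_left hmon hf0
      linarith [hβ]
    · push_neg at hf0
      have hga : I 0 (z 0) + β < 0 := by
        rw [hf0def] at hf0
        linarith
      have hμz : ∀ s ∈ Icc (0:ℝ) T, μ s = 0 := fun s hs =>
        auxMu0 (g := fun u => I u (z 0) + β) (g' := fun u => dI u (z 0))
          hμint hμ0 (hgd (z 0)) (hcont (z 0)) (hbound (z 0)) hE0 hga s hs hs.1
      have hzero : ∀ c : ℝ, c ∈ Icc (0:ℝ) T → (∫ s in (0:ℝ)..c, μ s) = 0 := by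
        intro c hc
        rw [show (∫ s in (0:ℝ)..c, μ s) = ∫ s in (0:ℝ)..c, (0:ℝ) from
          intervalIntegral.integral_congr (fun u hu => by
            rw [uIcc_of_le hc.1] at hu
            exact hμz u ⟨hu.1, le_trans hu.2 hc.2⟩),
          intervalIntegral.integral_zero]
      rw [hzero T (right_mem_Icc.2 hT.le), Real.exp_zero, mul_one]
      rw [hzero (t k) (htmem k), Real.exp_zero, mul_one] at hPk
      linarith [hβ]
  intro k
  refine ⟨?_, ?_⟩
  · rw [hSum k, ← EReal.coe_add]
    exact_mod_cast real1 k
  · have hc := hcoerc (t k) (htmem k) (z k)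
    have h1 := real1 k
    have h2 := hS0 k
    rw [le_div_iff₀ hc₁]
    nlinarith
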